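/- Define an L-structure M_X for each countable subset X ⊆ 2^ω as follows, with L = {E_n : n ∈ ω}: the universe is X × ω, and (η,i) E_n (τ,j) iff η↾n = τ↾n. If X, Y ⊆ 2^ω are countable and every point of X is an accumulation point of X (and similarly for Y), then M_X ≅ M_Y if and only if there is a bijection f : X → Y such that for all η, τ ∈ X and all n, η↾n = τ↾n iff f(η)↾n = f(τ)↾n. -/
import Mathlib


/-- For countable `X, Y ⊆ 2^ω` each consisting entirely of accumulation points of itself,
the structures `M_X`, `M_Y` on `X × ω`, `Y × ω` (with `(η,i) E_n (τ,j)` iff `η↾n = τ↾n`)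
are isomorphic iff there is a bijection `f : X → Y` preserving the lengths of common
initial segments. -/
theorem stmt8 (X Y : Set (ℕ → Bool)) (hX : X.Countable) (hY : Y.Countable)
    (haccX : ∀ η ∈ X, η ∈ closure (X \ {η})) (haccY : ∀ η ∈ Y, η ∈ closure (Y \ {η})) :
    (∃ f : ↥X × ℕ ≃ ↥Y × ℕ,
        ∀ (p q : ↥X × ℕ) (n : ℕ),
          (∀ k < n, p.1.1 k = q.1.1 k) ↔ (∀ k < n, (f p).1.1 k = (f q).1.1 k)) ↔
      (∃ g : ↥X ≃ ↥Y,
        ∀ (η τ : ↥X) (n : ℕ),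
          (∀ k < n, η.1 k = τ.1 k) ↔ (∀ k < n, (g η).1 k = (g τ).1 k)) := by
  constructor
  · rintro ⟨f, hf⟩
    have key : ∀ p q : ↥X × ℕ, p.1 = q.1 ↔ (f p).1 = (f q).1 := by
      intro p q
      constructor
      · intro h
        apply Subtype.ext; funext k
        exact (hf p q (k + 1)).mp (fun j _ => by rw [h]) k (Nat.lt_succ_self k)
      · intro h
        apply Subtype.ext; funext k
        exact (hf p q (k + 1)).mpr (fun j _ => by rw [h]) k (Nat.lt_succ_self k)
    have hbij : Function.Bijective (fun η : ↥X => (f (η, 0)).1) := by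
      constructor
      · intro a b h
        exact (key (a, 0) (b, 0)).mpr h
      · intro τ
        refine ⟨(f.symm (τ, 0)).1, ?_⟩
        have h1 : (f ((f.symm (τ, 0)).1, 0)).1 = (f (f.symm (τ, 0))).1 :=
          (key _ _).mp rfl
        simpa using h1
    refine ⟨Equiv.ofBijective _ hbij, ?_⟩
    intro η τ n
    exact hf (η, 0) (τ, 0) n
  · rintro ⟨g, hg⟩
    refine ⟨Equiv.prodCongr g (Equiv.refl ℕ), ?_⟩
    intro p q n
    exact hg p.1 q.1 n
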